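/- Let K be the field of fractions of ℚ[x₀,x₁,x₂,x₃,x₄,x₅], set A = (x₂x₄+x₃x₅)/(x₀x₁), B = (x₁x₄+x₀x₅)/(x₂x₃), C = (x₀x₂+x₁x₃)/(x₄x₅), and let τ'₁, τ'₂, τ'₃ be the maps on K⁶ defined by: τ'₁ replaces (v₀,v₁) by ((v₂v₄+v₃v₅)/v₁, (v₂v₄+v₃v₅)/v₀); τ'₂ replaces (v₂,v₃) by ((v₁v₄+v₀v₅)/v₃, (v₁v₄+v₀v₅)/v₂); τ'₃ replaces (v₄,v₅) by ((v₀v₂+v₁v₃)/v₅, (v₀v₂+v₁v₃)/v₄); each fixes the remaining entries. For natural numbers s, t, let w be the word consisting of the block (1,2,3) repeated 2t times followed by the block (2,1,3) repeated 2s+1 times, and let v be the result of applying the maps to X = (x₀,…,x₅) in left-to-right order along w. Then v₀ = x₀·A^{3s²+3st+3t²+3s+3t+1}·B^{3s²+3st+3t²+4s+2t+1}·C^{3s²+3st+3t²+2s+t} and v₁ = x₁ times the same monomial in A, B, C. -/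

import Mathlib

noncomputable section

/-- The polynomial ring ℚ[x₀,…,x₅]. -/
abbrev P : Type := MvPolynomial (Fin 6) ℚ

/-- K = Frac(ℚ[x₀,…,x₅]). -/
abbrev K : Type := FractionRing P

/-- The images of the variables x₀,…,x₅ in K. -/
def x (i : Fin 6) : K := algebraMap P K (MvPolynomial.X i)

/-- τ'₁ : replaces (v₀, v₁) by ((v₂v₄+v₃v₅)/v₁, (v₂v₄+v₃v₅)/v₀). -/
def tau1 (v : Fin 6 → K) : Fin 6 → K := fun k =>
  if k = 0 then (v 2 * v 4 + v 3 * v 5) / v 1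
  else if k = 1 then (v 2 * v 4 + v 3 * v 5) / v 0
  else v k

/-- τ'₂ : replaces (v₂, v₃) by ((v₁v₄+v₀v₅)/v₃, (v₁v₄+v₀v₅)/v₂). -/
def tau2 (v : Fin 6 → K) : Fin 6 → K := fun k =>
  if k = 2 then (v 1 * v 4 + v 0 * v 5) / v 3
  else if k = 3 then (v 1 * v 4 + v 0 * v 5) / v 2
  else v k

/-- τ'₃ : replaces (v₄, v₅) by ((v₀v₂+v₁v₃)/v₅, (v₀v₂+v₁v₃)/v₄). -/
def tau3 (v : Fin 6 → K) : Fin 6 → K := fun k =>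
  if k = 4 then (v 0 * v 2 + v 1 * v 3) / v 5
  else if k = 5 then (v 0 * v 2 + v 1 * v 3) / v 4
  else v k

/-- τ' indexed by Fin 3: `tau i` is τ'_{i+1}. -/
def tau : Fin 3 → (Fin 6 → K) → (Fin 6 → K)
  | 0 => tau1
  | 1 => tau2
  | 2 => tau3

/-- The initial labeled seed X = (x₀,…,x₅). -/
def X0 : Fin 6 → K := x

/-- Apply the maps τ'₍a₁₎, …, τ'₍aₙ₎ along the word `w` in left-to-right order. -/
def applyWord (w : List (Fin 3)) (v : Fin 6 → K) : Fin 6 → K :=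
  w.foldl (fun u a => tau a u) v

/-- A = (x₂x₄+x₃x₅)/(x₀x₁). -/
def A : K := (x 2 * x 4 + x 3 * x 5) / (x 0 * x 1)

/-- B = (x₁x₄+x₀x₅)/(x₂x₃). -/
def B : K := (x 1 * x 4 + x 0 * x 5) / (x 2 * x 3)

/-- C = (x₀x₂+x₁x₃)/(x₄x₅). -/
def C : K := (x 0 * x 2 + x 1 * x 3) / (x 4 * x 5)

/-- The canonical path (123)^{2t}(213)^{2s+1} to the odd alcove {3s+2, 3t-1}
(letters 1,2,3 are encoded as 0,1,2 in `Fin 3`). -/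
def word10 (s t : ℕ) : List (Fin 3) :=
  (List.replicate (2 * t) ([0, 1, 2] : List (Fin 3))).flatten ++
    (List.replicate (2 * s + 1) ([1, 0, 2] : List (Fin 3))).flatten

lemma x_ne (i : Fin 6) : x i ≠ 0 := by
  simp [x, IsFractionRing.to_map_eq_zero_iff, MvPolynomial.X_ne_zero]

lemma sum_ne (i j k l : Fin 6) : x i * x j + x k * x l ≠ 0 := by
  have h : x i * x j + x k * x l = algebraMap P K
      (MvPolynomial.X i * MvPolynomial.X j + MvPolynomial.X k * MvPolynomial.X l) := by
    simp [x, map_add, map_mul]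
  rw [h, ne_eq, IsFractionRing.to_map_eq_zero_iff]
  intro h0
  have := congrArg (MvPolynomial.eval (fun _ => (1:ℚ))) h0
  simp at this

lemma A_ne : A ≠ 0 := div_ne_zero (sum_ne 2 4 3 5) (mul_ne_zero (x_ne 0) (x_ne 1))
lemma B_ne : B ≠ 0 := div_ne_zero (sum_ne 1 4 0 5) (mul_ne_zero (x_ne 2) (x_ne 3))
lemma C_ne : C ≠ 0 := div_ne_zero (sum_ne 0 2 1 3) (mul_ne_zero (x_ne 4) (x_ne 5))

def m (a b c : ℤ) : K := A ^ a * B ^ b * C ^ c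

lemma m_ne (a b c : ℤ) : m a b c ≠ 0 :=
  mul_ne_zero (mul_ne_zero (zpow_ne_zero _ A_ne) (zpow_ne_zero _ B_ne)) (zpow_ne_zero _ C_ne)

lemma m_mul (a b c d e f : ℤ) : m a b c * m d e f = m (a + d) (b + e) (c + f) := by
  unfold m
  rw [zpow_add₀ A_ne, zpow_add₀ B_ne, zpow_add₀ C_ne]
  ring

lemma mA : m 1 0 0 = A := by unfold m; simp
lemma mB : m 0 1 0 = B := by unfold m; simp
lemma mC : m 0 0 1 = C := by unfold m; simp

lemma keyA (y z : K) (h : y * z = x 0 * x 1) : x 2 * x 4 + x 3 * x 5 = m 1 0 0 * (y * z) := by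
  rw [h, mA, A, div_mul_cancel₀ _ (mul_ne_zero (x_ne 0) (x_ne 1))]
lemma keyB (y z : K) (h : y * z = x 2 * x 3) : x 1 * x 4 + x 0 * x 5 = m 0 1 0 * (y * z) := by
  rw [h, mB, B, div_mul_cancel₀ _ (mul_ne_zero (x_ne 2) (x_ne 3))]
lemma keyC (y z : K) (h : y * z = x 4 * x 5) : x 0 * x 2 + x 1 * x 3 = m 0 0 1 * (y * z) := by
  rw [h, mC, C, div_mul_cancel₀ _ (mul_ne_zero (x_ne 4) (x_ne 5))]

lemma gen (p q p' q' y z : K) (hy : y ≠ 0)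
    (av bv cv aw bw cw au bu cu iA iB iC e1 e2 e3 : ℤ)
    (hkey : p * q + p' * q' = m iA iB iC * (y * z))
    (h1 : e1 = iA + (av + aw) ∧ e2 = iB + (bv + bw) ∧ e3 = iC + (cv + cw)) :
    (p * m av bv cv * (q * m aw bw cw) + p' * m av bv cv * (q' * m aw bw cw)) /
        (y * m au bu cu)
      = z * m (e1 - au) (e2 - bu) (e3 - cu) := by
  obtain ⟨h1, h2, h3⟩ := h1
  subst h1 h2 h3
  rw [div_eq_iff (mul_ne_zero hy (m_ne au bu cu))]
  calc p * m av bv cv * (q * m aw bw cw) + p' * m av bv cv * (q' * m aw bw cw)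
      = (p * q + p' * q') * (m av bv cv * m aw bw cw) := by ring
    _ = (p * q + p' * q') * m (av + aw) (bv + bw) (cv + cw) := by rw [m_mul]
    _ = (y * z) * (m iA iB iC * m (av + aw) (bv + bw) (cv + cw)) := by rw [hkey]; ring
    _ = (y * z) * m (iA + (av + aw)) (iB + (bv + bw)) (iC + (cv + cw)) := by rw [m_mul]
    _ = (y * z) * m (iA + (av + aw) - au + au) (iB + (bv + bw) - bu + bu)
          (iC + (cv + cw) - cu + cu) := by rw [sub_add_cancel, sub_add_cancel, sub_add_cancel]
    _ = z * m (iA + (av + aw) - au) (iB + (bv + bw) - bu) (iC + (cv + cw) - cu) *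
          (y * m au bu cu) := by rw [← m_mul]; ring

def st (a₀ b₀ c₀ a₂ b₂ c₂ a₄ b₄ c₄ : ℤ) : Fin 6 → K := fun k =>
  if k = 0 then x 0 * m a₀ b₀ c₀
  else if k = 1 then x 1 * m a₀ b₀ c₀
  else if k = 2 then x 2 * m a₂ b₂ c₂
  else if k = 3 then x 3 * m a₂ b₂ c₂
  else if k = 4 then x 4 * m a₄ b₄ c₄
  else x 5 * m a₄ b₄ c₄

lemma st_app0 (a₀ b₀ c₀ a₂ b₂ c₂ a₄ b₄ c₄ : ℤ) :
    st a₀ b₀ c₀ a₂ b₂ c₂ a₄ b₄ c₄ 0 = x 0 * m a₀ b₀ c₀ := by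
  simp only [st, if_true]

lemma st_app1 (a₀ b₀ c₀ a₂ b₂ c₂ a₄ b₄ c₄ : ℤ) :
    st a₀ b₀ c₀ a₂ b₂ c₂ a₄ b₄ c₄ 1 = x 1 * m a₀ b₀ c₀ := by
  simp only [st, if_true]; rw [if_neg (by decide)]

lemma st_app2 (a₀ b₀ c₀ a₂ b₂ c₂ a₄ b₄ c₄ : ℤ) :
    st a₀ b₀ c₀ a₂ b₂ c₂ a₄ b₄ c₄ 2 = x 2 * m a₂ b₂ c₂ := by
  simp only [st, if_true]; rw [if_neg (by decide), if_neg (by decide)]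

lemma st_app3 (a₀ b₀ c₀ a₂ b₂ c₂ a₄ b₄ c₄ : ℤ) :
    st a₀ b₀ c₀ a₂ b₂ c₂ a₄ b₄ c₄ 3 = x 3 * m a₂ b₂ c₂ := by
  simp only [st, if_true]; rw [if_neg (by decide), if_neg (by decide), if_neg (by decide)]

lemma st_app4 (a₀ b₀ c₀ a₂ b₂ c₂ a₄ b₄ c₄ : ℤ) :
    st a₀ b₀ c₀ a₂ b₂ c₂ a₄ b₄ c₄ 4 = x 4 * m a₄ b₄ c₄ := by
  simp only [st, if_true]; rw [if_neg (by decide), if_neg (by decide), if_neg (by decide), if_neg (by decide)]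

lemma st_app5 (a₀ b₀ c₀ a₂ b₂ c₂ a₄ b₄ c₄ : ℤ) :
    st a₀ b₀ c₀ a₂ b₂ c₂ a₄ b₄ c₄ 5 = x 5 * m a₄ b₄ c₄ := by
  simp only [st, if_true]; rw [if_neg (by decide), if_neg (by decide), if_neg (by decide), if_neg (by decide), if_neg (by decide)]

lemma tau1_st (a₀ b₀ c₀ a₂ b₂ c₂ a₄ b₄ c₄ : ℤ) :
    tau1 (st a₀ b₀ c₀ a₂ b₂ c₂ a₄ b₄ c₄) =
      st (1 + a₂ + a₄ - a₀) (b₂ + b₄ - b₀) (c₂ + c₄ - c₀) a₂ b₂ c₂ a₄ b₄ c₄ := by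
  funext k
  by_cases h0 : k = 0
  · subst h0
    simp only [tau1, st_app0, st_app1, st_app2, st_app3, st_app4, st_app5, if_true]
    exact gen (x 2) (x 4) (x 3) (x 5) (x 1) (x 0) (x_ne 1) _ _ _ _ _ _ _ _ _ 1 0 0 _ _ _
      (keyA _ _ (by ring)) ⟨by ring, by ring, by ring⟩
  by_cases h1 : k = 1
  · subst h1
    simp only [tau1, st_app0, st_app1, st_app2, st_app3, st_app4, st_app5,
      if_neg (show (1 : Fin 6) ≠ 0 by decide), if_true]
    exact gen (x 2) (x 4) (x 3) (x 5) (x 0) (x 1) (x_ne 0) _ _ _ _ _ _ _ _ _ 1 0 0 _ _ _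
      (keyA _ _ (by ring)) ⟨by ring, by ring, by ring⟩
  · simp only [tau1, st, if_neg h0, if_neg h1]

lemma tau2_st (a₀ b₀ c₀ a₂ b₂ c₂ a₄ b₄ c₄ : ℤ) :
    tau2 (st a₀ b₀ c₀ a₂ b₂ c₂ a₄ b₄ c₄) =
      st a₀ b₀ c₀ (a₀ + a₄ - a₂) (1 + b₀ + b₄ - b₂) (c₀ + c₄ - c₂) a₄ b₄ c₄ := by
  funext k
  by_cases h2 : k = 2
  · subst h2
    simp only [tau2, st_app0, st_app1, st_app2, st_app3, st_app4, st_app5, if_true]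
    exact gen (x 1) (x 4) (x 0) (x 5) (x 3) (x 2) (x_ne 3) _ _ _ _ _ _ _ _ _ 0 1 0 _ _ _
      (keyB _ _ (by ring)) ⟨by ring, by ring, by ring⟩
  by_cases h3 : k = 3
  · subst h3
    simp only [tau2, st_app0, st_app1, st_app2, st_app3, st_app4, st_app5,
      if_neg (show (3 : Fin 6) ≠ 2 by decide), if_true]
    exact gen (x 1) (x 4) (x 0) (x 5) (x 2) (x 3) (x_ne 2) _ _ _ _ _ _ _ _ _ 0 1 0 _ _ _
      (keyB _ _ (by ring)) ⟨by ring, by ring, by ring⟩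
  · simp only [tau2, st, if_neg h2, if_neg h3]

lemma tau3_st (a₀ b₀ c₀ a₂ b₂ c₂ a₄ b₄ c₄ : ℤ) :
    tau3 (st a₀ b₀ c₀ a₂ b₂ c₂ a₄ b₄ c₄) =
      st a₀ b₀ c₀ a₂ b₂ c₂ (a₀ + a₂ - a₄) (b₀ + b₂ - b₄) (1 + c₀ + c₂ - c₄) := by
  funext k
  by_cases h4 : k = 4
  · subst h4
    simp only [tau3, st_app0, st_app1, st_app2, st_app3, st_app4, st_app5, if_true]
    exact gen (x 0) (x 2) (x 1) (x 3) (x 5) (x 4) (x_ne 5) _ _ _ _ _ _ _ _ _ 0 0 1 _ _ _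
      (keyC _ _ (by ring)) ⟨by ring, by ring, by ring⟩
  by_cases h5 : k = 5
  · subst h5
    simp only [tau3, st_app0, st_app1, st_app2, st_app3, st_app4, st_app5,
      if_neg (show (5 : Fin 6) ≠ 4 by decide), if_true]
    exact gen (x 0) (x 2) (x 1) (x 3) (x 4) (x 5) (x_ne 4) _ _ _ _ _ _ _ _ _ 0 0 1 _ _ _
      (keyC _ _ (by ring)) ⟨by ring, by ring, by ring⟩
  · simp only [tau3, st, if_neg h4, if_neg h5]
    have hk : k = 0 ∨ k = 1 ∨ k = 2 ∨ k = 3 := by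
      rcases k with ⟨v, hv⟩
      simp only [Fin.ext_iff] at h4 h5 ⊢
      norm_num at h4 h5 ⊢
      omega
    rcases hk with h | h | h | h <;> subst h <;> simp [Fin.ext_iff]

lemma st_congr {a₀ b₀ c₀ a₂ b₂ c₂ a₄ b₄ c₄ a₀' b₀' c₀' a₂' b₂' c₂' a₄' b₄' c₄' : ℤ}
    (h1 : a₀ = a₀') (h2 : b₀ = b₀') (h3 : c₀ = c₀') (h4 : a₂ = a₂') (h5 : b₂ = b₂')
    (h6 : c₂ = c₂') (h7 : a₄ = a₄') (h8 : b₄ = b₄') (h9 : c₄ = c₄') :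
    st a₀ b₀ c₀ a₂ b₂ c₂ a₄ b₄ c₄ = st a₀' b₀' c₀' a₂' b₂' c₂' a₄' b₄' c₄' := by
  subst h1 h2 h3 h4 h5 h6 h7 h8 h9; rfl

lemma m_zero : m 0 0 0 = 1 := by unfold m; simp

lemma X0_st : X0 = st 0 0 0 0 0 0 0 0 0 := by
  funext k
  simp only [st, m_zero, mul_one, X0]
  by_cases h0 : k = 0
  · subst h0; simp
  by_cases h1 : k = 1
  · subst h1; simp
  by_cases h2 : k = 2
  · subst h2; simp
  by_cases h3 : k = 3
  · subst h3; simp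
  by_cases h4 : k = 4
  · subst h4; simp
  · rw [if_neg h0, if_neg h1, if_neg h2, if_neg h3, if_neg h4]
    have h5 : k = 5 := by
      rcases k with ⟨v, hv⟩
      simp only [Fin.ext_iff] at h0 h1 h2 h3 h4 ⊢
      norm_num at h0 h1 h2 h3 h4 ⊢
      omega
    subst h5; rfl

lemma applyWord_append (w1 w2 : List (Fin 3)) (v : Fin 6 → K) :
    applyWord (w1 ++ w2) v = applyWord w2 (applyWord w1 v) := by
  unfold applyWord
  exact List.foldl_append

lemma block_A (v : Fin 6 → K) :
    applyWord ([0, 1, 2] : List (Fin 3)) v = tau3 (tau2 (tau1 v)) := rfl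

lemma block_B (v : Fin 6 → K) :
    applyWord ([1, 0, 2] : List (Fin 3)) v = tau3 (tau1 (tau2 v)) := rfl

lemma phase1 (t : ℕ) :
    applyWord ((List.replicate (2 * t) ([0, 1, 2] : List (Fin 3))).flatten) X0 =
      st (3 * (t : ℤ) ^ 2) (3 * (t : ℤ) ^ 2 - t) (3 * (t : ℤ) ^ 2 - 2 * t)
        (3 * (t : ℤ) ^ 2 + t) (3 * (t : ℤ) ^ 2) (3 * (t : ℤ) ^ 2 - t)
        (3 * (t : ℤ) ^ 2 + 2 * t) (3 * (t : ℤ) ^ 2 + t) (3 * (t : ℤ) ^ 2) := by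
  induction t with
  | zero =>
    simp only [Nat.mul_zero, List.replicate_zero, List.flatten_nil, Nat.cast_zero]
    norm_num
    exact X0_st
  | succ t ih =>
    rw [show 2 * (t + 1) = 2 * t + 1 + 1 from by ring, List.replicate_succ',
      List.replicate_succ', List.flatten_append, List.flatten_append,
      applyWord_append, applyWord_append, ih]
    simp only [List.flatten_cons, List.flatten_nil, List.append_nil]
    rw [block_A, block_A, tau1_st, tau2_st, tau3_st, tau1_st, tau2_st, tau3_st]
    apply st_congr <;> push_cast <;> ring

lemma phase2 (s t : ℕ) :
    applyWord ((List.replicate (2 * s + 1) ([1, 0, 2] : List (Fin 3))).flatten)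
      (st (3 * (t : ℤ) ^ 2) (3 * (t : ℤ) ^ 2 - t) (3 * (t : ℤ) ^ 2 - 2 * t)
        (3 * (t : ℤ) ^ 2 + t) (3 * (t : ℤ) ^ 2) (3 * (t : ℤ) ^ 2 - t)
        (3 * (t : ℤ) ^ 2 + 2 * t) (3 * (t : ℤ) ^ 2 + t) (3 * (t : ℤ) ^ 2)) =
      st (3 * (s : ℤ) ^ 2 + 3 * s * t + 3 * t ^ 2 + 3 * s + 3 * t + 1)
         (3 * (s : ℤ) ^ 2 + 3 * s * t + 3 * t ^ 2 + 4 * s + 2 * t + 1)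
         (3 * (s : ℤ) ^ 2 + 3 * s * t + 3 * t ^ 2 + 2 * s + t)
         (3 * (s : ℤ) ^ 2 + 3 * s * t + 3 * t ^ 2 + 2 * s + t)
         (3 * (s : ℤ) ^ 2 + 3 * s * t + 3 * t ^ 2 + 3 * s + 1)
         (3 * (s : ℤ) ^ 2 + 3 * s * t + 3 * t ^ 2 + s - t)
         (3 * (s : ℤ) ^ 2 + 3 * s * t + 3 * t ^ 2 + 4 * s + 2 * t + 1)
         (3 * (s : ℤ) ^ 2 + 3 * s * t + 3 * t ^ 2 + 5 * s + t + 2)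
         (3 * (s : ℤ) ^ 2 + 3 * s * t + 3 * t ^ 2 + 3 * s + 1) := by
  induction s with
  | zero =>
    simp only [Nat.mul_zero, Nat.zero_add, List.replicate_one, List.flatten_cons,
      List.flatten_nil, List.append_nil, Nat.cast_zero]
    rw [block_B, tau2_st, tau1_st, tau3_st]
    apply st_congr <;> push_cast <;> ring
  | succ s ih =>
    rw [show 2 * (s + 1) + 1 = (2 * s + 1) + 1 + 1 from by ring, List.replicate_succ',
      List.replicate_succ', List.flatten_append, List.flatten_append,
      applyWord_append, applyWord_append, ih]
    simp only [List.flatten_cons, List.flatten_nil, List.append_nil]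
    rw [block_B, block_B, tau2_st, tau1_st, tau3_st, tau2_st, tau1_st, tau3_st]
    apply st_congr <;> push_cast <;> ring


/-- Theorem 2.1, odd-alcove case |i| ≡ 3 mod 6, |j| ≡ 0 mod 3, i = 6s+3, j = 3t:
the vertex-0 and vertex-1 cluster variables at the corresponding odd alcove. -/
theorem alcove_odd_30 (s t : ℕ) :
    applyWord (word10 s t) X0 0 =
      x 0 * A ^ (3 * (s : ℤ) ^ 2 + 3 * s * t + 3 * t ^ 2 + 3 * s + 3 * t + 1)
          * B ^ (3 * (s : ℤ) ^ 2 + 3 * s * t + 3 * t ^ 2 + 4 * s + 2 * t + 1)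
          * C ^ (3 * (s : ℤ) ^ 2 + 3 * s * t + 3 * t ^ 2 + 2 * s + t) ∧
    applyWord (word10 s t) X0 1 =
      x 1 * A ^ (3 * (s : ℤ) ^ 2 + 3 * s * t + 3 * t ^ 2 + 3 * s + 3 * t + 1)
          * B ^ (3 * (s : ℤ) ^ 2 + 3 * s * t + 3 * t ^ 2 + 4 * s + 2 * t + 1)
          * C ^ (3 * (s : ℤ) ^ 2 + 3 * s * t + 3 * t ^ 2 + 2 * s + t) := by
  rw [word10, applyWord_append, phase1, phase2]
  constructor
  · rw [st_app0]; unfold m; ring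
  · rw [st_app1]; unfold m; ring
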